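/- Let f(s) = s(-6s^3 + 9s^2 - 4s + 1). Then f satisfies the Fisher-KPP conditions f(0)=f(1)=0, 0 < f(s) < f'(0)·s on (0,1), and f(s) < 0 for s > 1, but s ↦ f(s)/s is not nonincreasing on (0,1). -/

import Mathlib

open Real Set

theorem stmt_6 (f : ℝ → ℝ)
    (hf : ∀ s, f s = s * (-6 * s ^ 3 + 9 * s ^ 2 - 4 * s + 1)) :
    f 0 = 0 ∧ f 1 = 0 ∧
    (∀ s ∈ Set.Ioo (0:ℝ) 1, 0 < f s ∧ f s < deriv f 0 * s) ∧
    (∀ s, 1 < s → f s < 0) ∧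
    ¬ (∀ s t : ℝ, s ∈ Set.Ioo (0:ℝ) 1 → t ∈ Set.Ioo (0:ℝ) 1 → s ≤ t → f t / t ≤ f s / s) := by
  have hfun : f = fun s => -6*s^4 + 9*s^3 - 4*s^2 + s := funext fun s => by rw [hf]; ring
  have hd : deriv f 0 = 1 := by
    have h : HasDerivAt f (-24*(0:ℝ)^3 + 27*0^2 - 8*0 + 1) 0 := by
      rw [hfun]
      have := (((hasDerivAt_pow 4 (0:ℝ)).const_mul (-6)).add
        ((hasDerivAt_pow 3 (0:ℝ)).const_mul 9)).sub
        (((hasDerivAt_pow 2 (0:ℝ)).const_mul 4).sub (hasDerivAt_id 0))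
      convert this using 1
      · rfl
      · rfl
      · funext x; simp [id]; ring
      · norm_num
    simpa using h.deriv
  refine ⟨by rw [hf]; ring, by rw [hf]; ring, ?_, ?_, ?_⟩
  · rintro s ⟨hs0, hs1⟩
    rw [hf, hd]
    constructor
    · nlinarith [sq_nonneg (2*s-1), sq_nonneg s, mul_pos hs0 (sub_pos.mpr hs1)]
    · nlinarith [mul_nonneg hs0.le (sq_nonneg (4*s-3)), hs0]
  · intro s hs
    rw [hf]
    nlinarith [sq_nonneg s, sq_nonneg (s-1)]
  · push_neg
    refine ⟨1/4, 1/2, ⟨by norm_num, by norm_num⟩, ⟨by norm_num, by norm_num⟩, by norm_num, ?_⟩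
    rw [hf, hf]; norm_num
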